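/- Let M be a diamond lattice with atom set A, f : M^n → ℝ submodular, and x ∈ P_M(f), i.e., x : [n] × A → ℝ satisfies x(y) ≤ f(y) for all y ∈ M^n. If a, b ∈ M^n are x-tight (x(a) = f(a) and x(b) = f(b)), then a ⊔ b and a ⊓ b are also x-tight. -/

import Mathlib

set_option linter.unreachableTactic false
set_option linter.unusedTactic false
set_option linter.unusedVariables false

inductive Dia (A : Type) : Type where
  | bot : Dia A
  | atom : A → Dia A
  | top : Dia A
  deriving DecidableEq

namespace Dia

variable {A : Type} [DecidableEq A]

instance : Lattice (Dia A) where
  le x y := x = bot ∨ y = top ∨ x = y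
  le_refl x := Or.inr (Or.inr rfl)
  le_trans x y z hxy hyz := by
    rcases hxy with h | h | h <;> rcases hyz with h' | h' | h' <;> simp_all
  le_antisymm x y hxy hyx := by
    rcases hxy with h | h | h <;> rcases hyx with h' | h' | h' <;> simp_all
  sup x y := if x = bot then y else if y = bot then x else if x = y then x else top
  inf x y := if x = top then y else if y = top then x else if x = y then x else bot
  le_sup_left x y := by
    try dsimp only
    split_ifs <;> (try simp_all) <;> (try split_ifs) <;> (try simp_all)
  le_sup_right x y := by
    try dsimp only
    split_ifs <;> (try simp_all) <;> (try split_ifs) <;> (try simp_all)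
  sup_le x y z hxz hyz := by
    try dsimp only
    rcases hxz with h | h | h <;> rcases hyz with h' | h' | h' <;> split_ifs <;> (try simp_all) <;> (try split_ifs) <;> (try simp_all)
  inf_le_left x y := by
    try dsimp only
    split_ifs <;> (try simp_all) <;> (try split_ifs) <;> (try simp_all)
  inf_le_right x y := by
    try dsimp only
    split_ifs <;> (try simp_all) <;> (try split_ifs) <;> (try simp_all)
  le_inf x y z hxy hxz := by
    try dsimp only
    rcases hxy with h | h | h <;> rcases hxz with h' | h' | h' <;> split_ifs <;> (try simp_all) <;> (try split_ifs) <;> (try simp_all)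

instance : BoundedOrder (Dia A) where
  top := top
  bot := bot
  le_top x := Or.inr (Or.inl rfl)
  bot_le x := Or.inl rfl

def drank : Dia A → ℕ
  | bot => 0
  | atom _ => 1
  | top => 2

noncomputable def gval (v : A → ℝ) : Dia A → ℝ
  | bot => 0
  | atom a => v a
  | top => sSup {r : ℝ | ∃ a a' : A, a ≠ a' ∧ r = v a + v a'}

end Dia

variable {A : Type} [DecidableEq A] {n : ℕ}

noncomputable def evalD (x : Fin n → A → ℝ) (y : Fin n → Dia A) : ℝ :=
  ∑ i, Dia.gval (x i) (y i)

def Submod (f : (Fin n → Dia A) → ℝ) : Prop :=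
  ∀ a b, f (a ⊓ b) + f (a ⊔ b) ≤ f a + f b

def InP (f : (Fin n → Dia A) → ℝ) (x : Fin n → A → ℝ) : Prop :=
  ∀ y, evalD x y ≤ f y

def UnifiedRow (v : A → ℝ) : Prop :=
  ∃ p : A, (∀ a b : A, a ≠ p → b ≠ p → v a = v b) ∧ ∀ a, v a ≤ v p

def Unified (x : Fin n → A → ℝ) : Prop := ∀ i, UnifiedRow (x i)



lemma dia_inf_def {A : Type} [DecidableEq A] (y z : Dia A) :
    y ⊓ z = if y = Dia.top then z else if z = Dia.top then y else if y = z then y else Dia.bot := rfl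

lemma dia_sup_def {A : Type} [DecidableEq A] (y z : Dia A) :
    y ⊔ z = if y = Dia.bot then z else if z = Dia.bot then y else if y = z then y else Dia.top := rfl

lemma pairset_bdd {A : Type} [Fintype A] (v : A → ℝ) :
    BddAbove {r : ℝ | ∃ a a' : A, a ≠ a' ∧ r = v a + v a'} := by
  apply Set.Finite.bddAbove
  have hsub : {r : ℝ | ∃ a a' : A, a ≠ a' ∧ r = v a + v a'} ⊆
      (fun p : A × A => v p.1 + v p.2) '' Set.univ := by
    rintro r ⟨a, a', _, rfl⟩; exact ⟨(a, a'), trivial, rfl⟩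
  exact (Set.finite_univ.image _).subset hsub

lemma gval_supermod {A : Type} [DecidableEq A] [Fintype A] (hA : 3 ≤ Fintype.card A)
    (v : A → ℝ) (y z : Dia A) :
    Dia.gval v y + Dia.gval v z ≤ Dia.gval v (y ⊓ z) + Dia.gval v (y ⊔ z) := by
  rw [dia_inf_def, dia_sup_def]
  cases y <;> cases z <;> simp [Dia.gval] <;> try ring_nf
  case atom.atom a a' =>
    by_cases h : a = a'
    · simp [h, Dia.gval]
    · simp [h, Dia.gval]
      have : v a + v a' ∈ {r : ℝ | ∃ a a' : A, a ≠ a' ∧ r = v a + v a'} := ⟨a, a', h, rfl⟩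
      have := le_csSup (pairset_bdd v) this
      linarith
  all_goals (try linarith)

lemma evalD_supermod {A : Type} [DecidableEq A] [Fintype A] {n : ℕ} (hA : 3 ≤ Fintype.card A)
    (x : Fin n → A → ℝ) (a b : Fin n → Dia A) :
    evalD x a + evalD x b ≤ evalD x (a ⊓ b) + evalD x (a ⊔ b) := by
  unfold evalD
  rw [← Finset.sum_add_distrib, ← Finset.sum_add_distrib]
  apply Finset.sum_le_sum
  intro i _
  exact gval_supermod hA (x i) (a i) (b i)

/-- if a, b are x-tight then so are a ⊔ b and a ⊓ b. -/
theorem stmt2 [Fintype A] (hA : 3 ≤ Fintype.card A)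
    (f : (Fin n → Dia A) → ℝ) (hf : Submod f)
    (x : Fin n → A → ℝ) (hx : InP f x)
    (a b : Fin n → Dia A)
    (ha : evalD x a = f a) (hb : evalD x b = f b) :
    evalD x (a ⊔ b) = f (a ⊔ b) ∧ evalD x (a ⊓ b) = f (a ⊓ b) := by
  have h1 := evalD_supermod hA x a b
  have h2 := hf a b
  have h3 := hx (a ⊔ b)
  have h4 := hx (a ⊓ b)
  constructor <;> linarith
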